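/- Let an instance of related machine scheduling have n jobs with strictly increasing positive processing times 0 < p_1 < p_2 < … < p_n and m machines with positive speeds s_1, …, s_m, and let τ* be a schedule minimizing the social cost SC. Then for every job j and every machine l: (ψ_{τ*_j}(τ*, j) + 1)/s_{τ*_j} ≥ ψ_l(τ*, j)/s_l; that is, the positional value of job j on its own machine in the optimal schedule is at least the positional value occupied by any strictly lower-priority job on any machine. -/
import Mathlib


open Finset

/-- Completion time of job `j` under schedule `τ`: jobs are processed in SPT order
(ties broken by index), so `C_j(τ) = (∑_{k ≤ j, τ_k = τ_j} p_k) / s_{τ_j}`. -/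
noncomputable def completionTime {n m : ℕ} (p : Fin n → ℝ) (s : Fin m → ℝ)
    (τ : Fin n → Fin m) (j : Fin n) : ℝ :=
  (∑ k ∈ univ.filter (fun k => k ≤ j ∧ τ k = τ j), p k) / s (τ j)

/-- Social cost: sum of completion times. -/
noncomputable def socialCost {n m : ℕ} (p : Fin n → ℝ) (s : Fin m → ℝ)
    (τ : Fin n → Fin m) : ℝ :=
  ∑ j, completionTime p s τ j

/-- `τ` is a pure Nash equilibrium: no job can decrease its completion time by
moving to another machine. -/
def IsNash {n m : ℕ} (p : Fin n → ℝ) (s : Fin m → ℝ) (τ : Fin n → Fin m) : Prop :=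
  ∀ (j : Fin n) (i : Fin m),
    completionTime p s τ j ≤
      (p j + ∑ k ∈ univ.filter (fun k => k < j ∧ τ k = i), p k) / s i

/-- `ψ_i(τ, j)`: the number of jobs on machine `i` in schedule `τ` with strictly
lower priority than job `j`. -/
def psi {n m : ℕ} (τ : Fin n → Fin m) (i : Fin m) (j : Fin n) : ℕ :=
  (univ.filter (fun k => j < k ∧ τ k = i)).card

lemma sc_coeff {n m : ℕ} (p : Fin n → ℝ) (s : Fin m → ℝ) (τ : Fin n → Fin m) :
    socialCost p s τ = ∑ x, p x * ((psi τ (τ x) x : ℝ) + 1) / s (τ x) := by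
  unfold socialCost completionTime
  have h0 : ∀ j : Fin n, (∑ k ∈ univ.filter (fun k => k ≤ j ∧ τ k = τ j), p k) / s (τ j)
      = ∑ k, (if k ≤ j ∧ τ k = τ j then p k / s (τ j) else 0) := by
    intro j
    rw [Finset.sum_div, sum_filter]
  simp_rw [h0]
  rw [Finset.sum_comm]
  refine Finset.sum_congr rfl fun k _ => ?_
  have h1 : ∀ j : Fin n, (if k ≤ j ∧ τ k = τ j then p k / s (τ j) else 0)
      = (if k ≤ j ∧ τ k = τ j then p k / s (τ k) else 0) := by
    intro j; split_ifs with h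
    · rw [h.2]
    · rfl
  simp_rw [h1]
  rw [← sum_filter, Finset.sum_const, nsmul_eq_mul]
  have h2 : univ.filter (fun j => k ≤ j ∧ τ k = τ j)
      = insert k (univ.filter (fun j => k < j ∧ τ j = τ k)) := by
    ext y
    simp only [mem_filter, mem_insert, mem_univ, true_and]
    constructor
    · rintro ⟨ha, hb⟩
      rcases eq_or_lt_of_le ha with h | h
      · exact Or.inl h.symm
      · exact Or.inr ⟨h, hb.symm⟩
    · rintro (rfl | ⟨ha, hb⟩)
      · exact ⟨le_refl _, rfl⟩
      · exact ⟨ha.le, hb.symm⟩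
  rw [h2, Finset.card_insert_of_notMem (by simp)]
  unfold psi
  push_cast
  ring

/-- Lemma 1 (optimality characterization, "only if" direction): in an optimal
schedule `τ*`, for every job `j` and every machine `l`,
`ψ_l(τ*, j)/s_l ≤ (ψ_{τ*_j}(τ*, j) + 1)/s_{τ*_j}`. -/
theorem opt_positional_value (n m : ℕ) (p : Fin n → ℝ) (s : Fin m → ℝ)
    (hp : ∀ j, 0 < p j) (hpmono : StrictMono p) (hs : ∀ i, 0 < s i)
    (τstar : Fin n → Fin m)
    (hopt : ∀ σ : Fin n → Fin m, socialCost p s τstar ≤ socialCost p s σ) :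
    ∀ (j : Fin n) (l : Fin m),
      (psi τstar l j : ℝ) / s l ≤
        ((psi τstar (τstar j) j : ℝ) + 1) / s (τstar j) := by
  intro j l
  have hsl := hs l
  have hsi := hs (τstar j)
  by_cases hl : l = τstar j
  · subst hl
    rw [div_le_div_iff₀ hsl hsl]
    nlinarith [hsl]
  by_cases h0 : psi τstar l j = 0
  · rw [h0]
    simp only [Nat.cast_zero, zero_div]
    positivity
  -- k : the minimal job > j on machine l
  have hSne : (univ.filter (fun x => j < x ∧ τstar x = l)).Nonempty := by
    rw [← Finset.card_pos]
    exact Nat.pos_of_ne_zero h0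
  set k := (univ.filter (fun x => j < x ∧ τstar x = l)).min' hSne with hkdef
  obtain ⟨hjk, hτk⟩ : j < k ∧ τstar k = l := by
    have h := Finset.min'_mem _ hSne
    rw [mem_filter] at h
    exact h.2
  have hmin : ∀ y, j < y → τstar y = l → k ≤ y := fun y h1 h2 =>
    Finset.min'_le _ y (by rw [mem_filter]; exact ⟨mem_univ y, h1, h2⟩)
  have hjkne : j ≠ k := ne_of_lt hjk
  have hil : τstar j ≠ l := fun h => hl h.symm
  set σ : Fin n → Fin m := fun x => if x = j then l else if x = k then τstar j else τstar x
    with hσdef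
  have hσj : σ j = l := by simp [hσdef]
  have hσk : σ k = τstar j := by simp [hσdef, hjkne.symm]
  have hσo : ∀ x, x ≠ j → x ≠ k → σ x = τstar x := by
    intro x h1 h2; simp [hσdef, h1, h2]
  have hk_mem : k ∈ univ.filter (fun y => j < y ∧ τstar y = l) := by
    rw [mem_filter]; exact ⟨mem_univ _, hjk, hτk⟩
  -- F1
  have F1 : psi σ l j + 1 = psi τstar l j := by
    unfold psi
    have hset : univ.filter (fun y => j < y ∧ σ y = l)
        = (univ.filter (fun y => j < y ∧ τstar y = l)).erase k := by
      ext y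
      simp only [mem_filter, mem_erase, mem_univ, true_and]
      constructor
      · rintro ⟨h1, h2⟩
        have hyj : y ≠ j := ne_of_gt h1
        have hyk : y ≠ k := by
          intro h; rw [h, hσk] at h2; exact hil h2
        rw [hσo y hyj hyk] at h2
        exact ⟨hyk, h1, h2⟩
      · rintro ⟨hyk, h1, h2⟩
        rw [hσo y (ne_of_gt h1) hyk]
        exact ⟨h1, h2⟩
    rw [hset]
    exact Finset.card_erase_add_one hk_mem
  -- F2
  have F2 : psi σ (τstar j) k = psi τstar (τstar j) k := by
    unfold psi
    congr 1
    ext y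
    simp only [mem_filter, mem_univ, true_and]
    constructor
    · rintro ⟨h1, h2⟩
      rw [hσo y (ne_of_gt (hjk.trans h1)) (ne_of_gt h1)] at h2
      exact ⟨h1, h2⟩
    · rintro ⟨h1, h2⟩
      rw [hσo y (ne_of_gt (hjk.trans h1)) (ne_of_gt h1)]
      exact ⟨h1, h2⟩
  -- F3
  have F3 : psi τstar l k + 1 = psi τstar l j := by
    unfold psi
    have hset : univ.filter (fun y => k < y ∧ τstar y = l)
        = (univ.filter (fun y => j < y ∧ τstar y = l)).erase k := by
      ext y
      simp only [mem_filter, mem_erase, mem_univ, true_and]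
      constructor
      · rintro ⟨h1, h2⟩
        exact ⟨ne_of_gt h1, hjk.trans h1, h2⟩
      · rintro ⟨hyk, h1, h2⟩
        exact ⟨lt_of_le_of_ne (hmin y h1 h2) (Ne.symm hyk), h2⟩
    rw [hset]
    exact Finset.card_erase_add_one hk_mem
  -- F4 : jobs before j are unaffected (card-wise) via the swap bijection
  have F4 : ∀ x : Fin n, x < j → psi σ (τstar x) x = psi τstar (τstar x) x := by
    intro x hx
    have hxk : x < k := hx.trans hjk
    unfold psi
    apply Finset.card_bij' (fun y _ => Equiv.swap j k y) (fun y _ => Equiv.swap j k y)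
    · intro y hy
      rw [mem_filter] at hy ⊢
      obtain ⟨-, h1, h2⟩ := hy
      refine ⟨mem_univ _, ?_⟩
      by_cases hyj : y = j
      · subst hyj
        rw [Equiv.swap_apply_left]
        rw [hσj] at h2
        exact ⟨hxk, by rw [hτk, h2]⟩
      by_cases hyk : y = k
      · subst hyk
        rw [Equiv.swap_apply_right]
        rw [hσk] at h2
        exact ⟨hx, h2⟩
      · rw [Equiv.swap_apply_of_ne_of_ne hyj hyk]
        rw [hσo y hyj hyk] at h2
        exact ⟨h1, h2⟩
    · intro y hy
      rw [mem_filter] at hy ⊢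
      obtain ⟨-, h1, h2⟩ := hy
      refine ⟨mem_univ _, ?_⟩
      by_cases hyj : y = j
      · subst hyj
        rw [Equiv.swap_apply_left]
        exact ⟨hxk, by rw [hσk, h2]⟩
      by_cases hyk : y = k
      · subst hyk
        rw [Equiv.swap_apply_right]
        rw [hτk] at h2
        exact ⟨hx, by rw [hσj, h2]⟩
      · rw [Equiv.swap_apply_of_ne_of_ne hyj hyk]
        rw [hσo y hyj hyk]
        exact ⟨h1, h2⟩
    · intro y _; exact Equiv.swap_apply_self _ _ _
    · intro y _; exact Equiv.swap_apply_self _ _ _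
  -- F5a : middle job on machine τstar j
  have F5a : ∀ x : Fin n, j < x → x < k → τstar x = τstar j →
      psi σ (τstar x) x = psi τstar (τstar x) x + 1 := by
    intro x hx1 hx2 hx3
    unfold psi
    have hset : univ.filter (fun y => x < y ∧ σ y = τstar x)
        = insert k (univ.filter (fun y => x < y ∧ τstar y = τstar x)) := by
      ext y
      simp only [mem_filter, mem_insert, mem_univ, true_and]
      constructor
      · rintro ⟨h1, h2⟩
        by_cases hyk : y = k
        · exact Or.inl hyk
        have hyj : y ≠ j := ne_of_gt (hx1.trans h1)
        rw [hσo y hyj hyk] at h2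
        exact Or.inr ⟨h1, h2⟩
      · rintro (rfl | ⟨h1, h2⟩)
        · exact ⟨hx2, by rw [hσk, hx3]⟩
        · have hyj : y ≠ j := ne_of_gt (hx1.trans h1)
          have hyk : y ≠ k := by
            intro h; rw [h, hτk] at h2
            exact hil (hx3 ▸ h2.symm)
          rw [hσo y hyj hyk]
          exact ⟨h1, h2⟩
    rw [hset, Finset.card_insert_of_notMem]
    simp only [mem_filter, mem_univ, true_and, not_and]
    intro _
    rw [hτk, hx3]
    exact fun h => hil h.symm
  -- F5b : middle job not on machine τstar j
  have F5b : ∀ x : Fin n, j < x → x < k → τstar x ≠ τstar j →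
      psi σ (τstar x) x = psi τstar (τstar x) x := by
    intro x hx1 hx2 hx3
    have hxl : τstar x ≠ l := by
      intro h
      exact absurd (hmin x hx1 h) (not_le.mpr hx2)
    unfold psi
    congr 1
    ext y
    simp only [mem_filter, mem_univ, true_and]
    constructor
    · rintro ⟨h1, h2⟩
      have hyj : y ≠ j := ne_of_gt (hx1.trans h1)
      have hyk : y ≠ k := by
        intro h; rw [h, hσk] at h2; exact hx3 h2.symm
      rw [hσo y hyj hyk] at h2
      exact ⟨h1, h2⟩
    · rintro ⟨h1, h2⟩
      have hyj : y ≠ j := ne_of_gt (hx1.trans h1)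
      have hyk : y ≠ k := by
        intro h; rw [h, hτk] at h2; exact hxl h2.symm
      rw [hσo y hyj hyk]
      exact ⟨h1, h2⟩
  -- F6 : jobs after k unaffected
  have F6 : ∀ x : Fin n, k < x → psi σ (τstar x) x = psi τstar (τstar x) x := by
    intro x hx
    unfold psi
    congr 1
    ext y
    simp only [mem_filter, mem_univ, true_and]
    constructor
    · rintro ⟨h1, h2⟩
      rw [hσo y (ne_of_gt (hjk.trans (hx.trans h1))) (ne_of_gt (hx.trans h1))] at h2
      exact ⟨h1, h2⟩
    · rintro ⟨h1, h2⟩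
      rw [hσo y (ne_of_gt (hjk.trans (hx.trans h1))) (ne_of_gt (hx.trans h1))]
      exact ⟨h1, h2⟩
  -- the middle set
  set Mid := univ.filter (fun x => (j < x ∧ x < k) ∧ τstar x = τstar j) with hMiddef
  -- count split
  have Fcount : psi τstar (τstar j) j = Mid.card + psi τstar (τstar j) k := by
    unfold psi
    rw [hMiddef, ← Finset.card_union_of_disjoint]
    · congr 1
      ext y
      simp only [mem_union, mem_filter, mem_univ, true_and]
      constructor
      · rintro ⟨h1, h2⟩
        rcases lt_trichotomy y k with h | h | h
        · exact Or.inl ⟨⟨h1, h⟩, h2⟩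
        · exfalso; rw [h, hτk] at h2; exact hil h2.symm
        · exact Or.inr ⟨h, h2⟩
      · rintro (⟨⟨h1, _⟩, h2⟩ | ⟨h1, h2⟩)
        · exact ⟨h1, h2⟩
        · exact ⟨hjk.trans h1, h2⟩
    · rw [Finset.disjoint_left]
      intro y hy1 hy2
      rw [mem_filter] at hy1 hy2
      exact absurd hy2.2.1 (not_lt.mpr hy1.2.1.2.le)
  -- the difference function
  set D : Fin n → ℝ := fun x =>
    p x * ((psi σ (σ x) x : ℝ) + 1) / s (σ x)
      - p x * ((psi τstar (τstar x) x : ℝ) + 1) / s (τstar x) with hDdef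
  have hD0 : ∀ x ∈ (univ : Finset (Fin n)), x ∉ insert j (insert k Mid) → D x = 0 := by
    intro x _ hx
    simp only [mem_insert, hMiddef, mem_filter, mem_univ, true_and, not_or] at hx
    obtain ⟨hxj, hxk, hxmid⟩ := hx
    rw [hDdef]
    rcases lt_trichotomy x j with h | h | h
    · simp only
      rw [hσo x hxj hxk, F4 x h, sub_self]
    · exact absurd h hxj
    rcases lt_trichotomy x k with h2 | h2 | h2
    · have hxτ : τstar x ≠ τstar j := fun hτ => hxmid ⟨⟨h, h2⟩, hτ⟩
      simp only
      rw [hσo x hxj hxk, F5b x h h2 hxτ, sub_self]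
    · exact absurd h2 hxk
    · simp only
      rw [hσo x hxj hxk, F6 x h2, sub_self]
  have hsum : (0:ℝ) ≤ ∑ x ∈ insert j (insert k Mid), D x := by
    rw [Finset.sum_subset (Finset.subset_univ _) hD0]
    have h := hopt σ
    rw [sc_coeff, sc_coeff] at h
    rw [hDdef]
    rw [Finset.sum_sub_distrib]
    linarith
  have hjnot : j ∉ insert k Mid := by
    simp only [mem_insert, hMiddef, mem_filter, mem_univ, true_and, not_or]
    exact ⟨hjkne, fun h => lt_irrefl j h.1.1⟩
  have hknot : k ∉ Mid := by
    simp only [hMiddef, mem_filter, mem_univ, true_and, not_and]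
    intro h; exact absurd h.2 (lt_irrefl k)
  rw [Finset.sum_insert hjnot, Finset.sum_insert hknot] at hsum
  -- abbreviations
  have hA : (psi τstar (τstar j) j : ℝ) = (Mid.card : ℝ) + (psi τstar (τstar j) k : ℝ) := by
    rw [Fcount]; push_cast; ring
  have hB1 : ((psi σ l j : ℝ) + 1) = (psi τstar l j : ℝ) := by
    rw [← F1]; push_cast; ring
  have hB2 : ((psi τstar l k : ℝ) + 1) = (psi τstar l j : ℝ) := by
    rw [← F3]; push_cast; ring
  have hDj : D j = p j * (psi τstar l j : ℝ) / s l
      - p j * ((psi τstar (τstar j) j : ℝ) + 1) / s (τstar j) := by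
    rw [hDdef]
    simp only
    rw [hσj, hB1]
  have hDk : D k = p k * ((psi τstar (τstar j) k : ℝ) + 1) / s (τstar j)
      - p k * (psi τstar l j : ℝ) / s l := by
    rw [hDdef]
    simp only
    rw [hσk, hτk, hB2, F2]
  have hMidsum : ∑ x ∈ Mid, D x ≤ (Mid.card : ℝ) * (p k / s (τstar j)) := by
    have hle : ∀ x ∈ Mid, D x ≤ p k / s (τstar j) := by
      intro x hx
      rw [hMiddef, mem_filter] at hx
      obtain ⟨-, ⟨hx1, hx2⟩, hx3⟩ := hx
      have hDx : D x = p x / s (τstar j) := by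
        rw [hDdef]
        simp only
        rw [hσo x (ne_of_gt hx1) (ne_of_lt hx2), F5a x hx1 hx2 hx3, hx3]
        push_cast
        field_simp
        ring
      rw [hDx]
      have hpxk : p x ≤ p k := (hpmono hx2).le
      exact div_le_div_of_nonneg_right hpxk hsi.le
    calc ∑ x ∈ Mid, D x ≤ ∑ x ∈ Mid, p k / s (τstar j) := Finset.sum_le_sum hle
      _ = (Mid.card : ℝ) * (p k / s (τstar j)) := by rw [Finset.sum_const, nsmul_eq_mul]
  have hpk : p j < p k := hpmono hjk
  -- final algebra
  set A := (psi τstar (τstar j) j : ℝ)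
  set B := (psi τstar l j : ℝ)
  set K := (psi τstar (τstar j) k : ℝ)
  set t := (Mid.card : ℝ)
  have hchain : (0:ℝ) ≤ p j * B / s l - p j * (A + 1) / s (τstar j)
      + (p k * (K + 1) / s (τstar j) - p k * B / s l) + t * (p k / s (τstar j)) := by
    rw [hDj, hDk] at hsum
    linarith [hsum, hMidsum]
  rw [div_le_div_iff₀ hsl hsi]
  have hexp : (p j * B / s l - p j * (A + 1) / s (τstar j)
      + (p k * (K + 1) / s (τstar j) - p k * B / s l) + t * (p k / s (τstar j)))
      * (s l * s (τstar j))
      = p j * B * s (τstar j) - p j * (A + 1) * s l + p k * (K + 1) * s l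
        - p k * B * s (τstar j) + t * p k * s l := by
    field_simp
    ring
  have hpoly : (0:ℝ) ≤ p j * B * s (τstar j) - p j * (A + 1) * s l + p k * (K + 1) * s l
      - p k * B * s (τstar j) + t * p k * s l := by
    rw [← hexp]
    exact mul_nonneg hchain (by positivity)
  rw [hA] at hpoly ⊢
  nlinarith [hpoly, sub_pos.mpr hpk, hsl, hsi]
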